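/- Let B = ⟨a, t ∣ t⁻¹a²t = a³⟩ be the Baumslag–Solitar group BS(2,3), let F be the subgroup of B generated by t and [a, t⁻¹at], and let φ : B → B be the endomorphism with φ(a) = a² and φ(t) = t. Then φ(F) equals the cyclic subgroup ⟨t⟩ generated by t; in particular, F is strictly contained in φ⁻¹(F). -/

import Mathlib

/-- The generator `a` of the Baumslag–Solitar group `BS(2,3)`,
as an element of the free group on `Bool` (`true ↦ a`, `false ↦ t`). -/
def bsA : FreeGroup Bool := FreeGroup.of true

/-- The generator `t` of the Baumslag–Solitar group `BS(2,3)`. -/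
def bsT : FreeGroup Bool := FreeGroup.of false

/-- The single relator `t⁻¹ a² t a⁻³` of `BS(2,3)`. -/
def bsRels : Set (FreeGroup Bool) := {bsT⁻¹ * bsA ^ 2 * bsT * bsA ^ (-3 : ℤ)}

/-- The Baumslag–Solitar group `BS(2,3) = ⟨a, t ∣ t⁻¹a²t = a³⟩`. -/
abbrev BS23 : Type := PresentedGroup bsRels

/-- The image of the generator `a` in `BS(2,3)`. -/
def aB : BS23 := PresentedGroup.of true

/-- The image of the generator `t` in `BS(2,3)`. -/
def tB : BS23 := PresentedGroup.of false

/-- The commutator with the convention `[x, y] := x⁻¹y⁻¹xy`. -/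
def pcomm {G : Type*} [Group G] (x y : G) : G := x⁻¹ * y⁻¹ * x * y

/-- The element `c := [a, t⁻¹at]` of `BS(2,3)`. -/
def cB : BS23 := pcomm aB (tB⁻¹ * aB * tB)

/-- The subgroup `F = ⟨t, [a, t⁻¹at]⟩` of `BS(2,3)`. -/
def Fsub : Subgroup BS23 := Subgroup.closure {tB, cB}

-- auxiliary lemmas

lemma bs_rel : tB⁻¹ * aB ^ 2 * tB = aB ^ 3 := by
  have h0 : PresentedGroup.mk bsRels (bsT⁻¹ * bsA ^ 2 * bsT * bsA ^ (-3:ℤ)) = 1 := by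
    apply (QuotientGroup.eq_one_iff _).mpr
    exact Subgroup.subset_normalClosure rfl
  rw [map_mul, map_mul, map_mul, map_inv, map_pow, map_zpow] at h0
  have ha : PresentedGroup.mk bsRels bsA = aB := rfl
  have ht : PresentedGroup.mk bsRels bsT = tB := rfl
  rw [ha, ht] at h0
  rw [show (-3:ℤ) = -(3:ℤ) from rfl, zpow_neg] at h0
  have h1 := mul_inv_eq_one.mp h0
  rw [show (3:ℤ) = ((3:ℕ):ℤ) from rfl, zpow_natCast] at h1
  exact h1

open Multiplicative in
def εf : Bool → Multiplicative ℤ := fun b => if b then 1 else ofAdd 1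

lemma εrel : ∀ r ∈ bsRels, FreeGroup.lift εf r = 1 := by
  rintro r rfl
  simp [bsA, bsT, εf]

def ε : BS23 →* Multiplicative ℤ := PresentedGroup.toGroup εrel

lemma ε_t : ε tB = Multiplicative.ofAdd 1 := by
  rw [tB, ε, PresentedGroup.toGroup.of]; rfl

lemma ε_a : ε aB = 1 := by
  rw [aB, ε, PresentedGroup.toGroup.of]; rfl

lemma ε_c : ε cB = 1 := by
  simp [cB, pcomm, map_mul, map_inv, ε_a]

open Multiplicative HNNExtension

abbrev Zm := Multiplicative ℤ

def hA : Zm →* Zm := zpowersHom Zm (ofAdd (3:ℤ))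
def hB : Zm →* Zm := zpowersHom Zm (ofAdd (2:ℤ))

lemma hA_apply (n : Zm) : hA n = ofAdd (3 * n.toAdd) := by
  rw [hA, zpowersHom_apply, mul_comm, ← smul_eq_mul, ofAdd_zsmul]

lemma hB_apply (n : Zm) : hB n = ofAdd (2 * n.toAdd) := by
  rw [hB, zpowersHom_apply, mul_comm, ← smul_eq_mul, ofAdd_zsmul]

lemma hA_inj : Function.Injective hA := by
  intro m n h
  rw [hA_apply, hA_apply] at h
  have h2 := ofAdd.injective h
  have : toAdd m = toAdd n := by omega
  exact toAdd.injective this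

lemma hB_inj : Function.Injective hB := by
  intro m n h
  rw [hB_apply, hB_apply] at h
  have h2 := ofAdd.injective h
  have : toAdd m = toAdd n := by omega
  exact toAdd.injective this

noncomputable def eA : Zm ≃* hA.range := MulEquiv.ofBijective hA.rangeRestrict
  ⟨fun a b h => hA_inj (congrArg Subtype.val h), hA.rangeRestrict_surjective⟩

noncomputable def eB : Zm ≃* hB.range := MulEquiv.ofBijective hB.rangeRestrict
  ⟨fun a b h => hB_inj (congrArg Subtype.val h), hB.rangeRestrict_surjective⟩

noncomputable def φ0 : hA.range ≃* hB.range := eA.symm.trans eB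

lemma eA_apply (n : Zm) : (eA n : Zm) = ofAdd (3 * n.toAdd) := by
  rw [← hA_apply]; rfl

lemma eB_apply (n : Zm) : (eB n : Zm) = ofAdd (2 * n.toAdd) := by
  rw [← hB_apply]; rfl

lemma mem_rangeA {x : Zm} (h : x ∈ hA.range) : (3:ℤ) ∣ x.toAdd := by
  obtain ⟨n, rfl⟩ := h
  rw [hA_apply]; simp

lemma mem_rangeB {x : Zm} (h : x ∈ hB.range) : (2:ℤ) ∣ x.toAdd := by
  obtain ⟨n, rfl⟩ := h
  rw [hB_apply]; simp

lemma φ0_symm_a2 (h2 : ofAdd (2:ℤ) ∈ hB.range) (h3 : ofAdd (3:ℤ) ∈ hA.range) :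
    φ0.symm ⟨ofAdd (2:ℤ), h2⟩ = ⟨ofAdd (3:ℤ), h3⟩ := by
  have hb : eB (ofAdd (1:ℤ)) = ⟨ofAdd (2:ℤ), h2⟩ := by
    ext; rw [eB_apply]; simp
  have ha : eA (ofAdd (1:ℤ)) = ⟨ofAdd (3:ℤ), h3⟩ := by
    ext; rw [eA_apply]; simp
  rw [MulEquiv.symm_apply_eq, eq_comm]
  show eB (eA.symm _) = _
  rw [← ha, MulEquiv.symm_apply_apply, hb]

abbrev Hgrp := HNNExtension Zm hA.range hB.range φ0

noncomputable def aH : Hgrp := HNNExtension.of (ofAdd (1:ℤ))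

lemma mem2 : ofAdd (2:ℤ) ∈ hB.range := ⟨ofAdd (1:ℤ), by rw [hB_apply]; simp⟩
lemma mem3 : ofAdd (3:ℤ) ∈ hA.range := ⟨ofAdd (1:ℤ), by rw [hA_apply]; simp⟩

lemma H_rel : (t : Hgrp)⁻¹ * aH ^ 2 * t = aH ^ 3 := by
  have h := HNNExtension.equiv_symm_eq_conj (φ := φ0) ⟨ofAdd (2:ℤ), mem2⟩
  rw [φ0_symm_a2 mem2 mem3] at h
  have e2 : aH ^ 2 = HNNExtension.of (A := hA.range) (B := hB.range) (φ := φ0) (ofAdd (2:ℤ)) := by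
    rw [aH, ← map_pow, ← ofAdd_nsmul]; norm_num
  have e3 : aH ^ 3 = HNNExtension.of (A := hA.range) (B := hB.range) (φ := φ0) (ofAdd (3:ℤ)) := by
    rw [aH, ← map_pow, ← ofAdd_nsmul]; norm_num
  rw [e2, e3, h]

lemma not_memA_one : ofAdd (1:ℤ) ∉ hA.range := fun h => by
  have := mem_rangeA h; simp at this
lemma not_memB_one : ofAdd (1:ℤ) ∉ hB.range := fun h => by
  have := mem_rangeB h; simp at this
lemma not_memA_negone : ofAdd (-1:ℤ) ∉ hA.range := fun h => by
  have := mem_rangeA h; simp at this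
lemma not_memB_negone : ofAdd (-1:ℤ) ∉ hB.range := fun h => by
  have := mem_rangeB h; simp at this

noncomputable def cword : HNNExtension.NormalWord.ReducedWord Zm hA.range hB.range :=
  { head := ofAdd (-1:ℤ)
    toList := [(-1, ofAdd (-1:ℤ)), (1, ofAdd (1:ℤ)), (-1, ofAdd (1:ℤ)), (1, (1:Zm))]
    chain := by
      refine List.isChain_cons_cons.2 ⟨?_, List.isChain_cons_cons.2 ⟨?_, List.isChain_cons_cons.2 ⟨?_, List.isChain_singleton _⟩⟩⟩
      · intro h; rw [toSubgroup_neg_one] at h; exact absurd h not_memB_negone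
      · intro h; rw [toSubgroup_one] at h; exact absurd h not_memA_one
      · intro h; rw [toSubgroup_neg_one] at h; exact absurd h not_memB_one }

lemma cword_prod :
    cword.prod φ0 = aH⁻¹ * t⁻¹ * aH⁻¹ * t * aH * t⁻¹ * aH * t := by
  rw [HNNExtension.NormalWord.ReducedWord.prod]
  simp only [cword, List.map_cons, List.map_nil, List.prod_cons, List.prod_nil]
  simp only [Units.val_neg, Units.val_one, zpow_neg, zpow_one, map_one, mul_one]
  rw [aH, ← map_inv]
  simp only [ofAdd_neg]
  group

lemma c_ne_one : aH⁻¹ * t⁻¹ * aH⁻¹ * t * aH * t⁻¹ * aH * t ≠ 1 := by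
  intro h
  have hmem : cword.prod φ0 ∈ (HNNExtension.of.range : Subgroup Hgrp) := by
    rw [cword_prod, h]; exact one_mem _
  have := HNNExtension.ReducedWord.toList_eq_nil_of_mem_of_range φ0 cword hmem
  simp [cword] at this

open Multiplicative in
noncomputable def ρf : Bool → Hgrp := fun b => if b then aH else HNNExtension.t

lemma ρrel : ∀ r ∈ bsRels, FreeGroup.lift ρf r = 1 := by
  rintro r rfl
  simp only [bsA, bsT, map_mul, map_inv, map_pow, map_zpow, FreeGroup.lift_apply_of, ρf,
    if_pos, if_neg, Bool.false_eq_true, not_false_iff, ite_true, ite_false]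
  rw [show (-3:ℤ) = -(3:ℤ) from rfl, zpow_neg, show ((3:ℤ) = ((3:ℕ):ℤ)) from rfl, zpow_natCast]
  rw [H_rel]
  group

noncomputable def ρ : BS23 →* Hgrp := PresentedGroup.toGroup ρrel

lemma ρ_a : ρ aB = aH := by rw [aB, ρ, PresentedGroup.toGroup.of]; rfl
lemma ρ_t : ρ tB = HNNExtension.t := by rw [tB, ρ, PresentedGroup.toGroup.of]; rfl

lemma ρ_c : ρ cB ≠ 1 := by
  have h : ρ cB = aH⁻¹ * HNNExtension.t⁻¹ * aH⁻¹ * HNNExtension.t * aH *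
      HNNExtension.t⁻¹ * aH * HNNExtension.t := by
    simp only [cB, pcomm, map_mul, map_inv, ρ_a, ρ_t]
    group
  rw [h]
  exact c_ne_one

lemma c_mem_F : cB ∈ Fsub := Subgroup.subset_closure (by simp)
lemma t_mem_F : tB ∈ Fsub := Subgroup.subset_closure (by simp)

/-- If `φ : BS(2,3) → BS(2,3)` is the endomorphism with `φ(a) = a²` and `φ(t) = t`,
then `φ(F) = ⟨t⟩`; in particular `F` is strictly contained in `φ⁻¹(F)`. -/
theorem image_F_eq_zpowers_t (φ : BS23 →* BS23)
    (ha : φ aB = aB ^ 2) (ht : φ tB = tB) :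
    Fsub.map φ = Subgroup.zpowers tB ∧ Fsub < Fsub.comap φ := by
  have hφc : φ cB = 1 := by
    simp only [cB, pcomm, map_mul, map_inv, ha, ht]
    rw [bs_rel]
    group
  have hmap : Fsub.map φ = Subgroup.zpowers tB := by
    rw [Fsub, MonoidHom.map_closure, Set.image_pair, ht, hφc]
    apply le_antisymm
    · rw [Subgroup.closure_le]
      rintro x hx
      rcases hx with rfl | rfl
      · exact Subgroup.mem_zpowers _
      · exact one_mem _
    · exact Subgroup.zpowers_le.mpr (Subgroup.subset_closure (by simp))
  refine ⟨hmap, ?_⟩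
  rw [lt_iff_le_and_ne]
  constructor
  · rw [Fsub, Subgroup.closure_le]
    rintro x hx
    rcases hx with rfl | rfl
    · rw [SetLike.mem_coe, Subgroup.mem_comap, ht]; exact t_mem_F
    · rw [SetLike.mem_coe, Subgroup.mem_comap, hφc]; exact one_mem _
  · intro heq
    have hsurj : Function.Surjective φ := by
      rw [← MonoidHom.range_eq_top, eq_top_iff, ← PresentedGroup.closure_range_of bsRels,
        Subgroup.closure_le]
      rintro x ⟨b, rfl⟩
      cases b
      · exact ⟨tB, ht⟩
      · refine ⟨tB⁻¹ * aB * tB * aB⁻¹, ?_⟩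
        rw [map_mul, map_mul, map_mul, map_inv, map_inv, ha, ht, bs_rel]
        show aB ^ 3 * (aB ^ 2)⁻¹ = aB
        group
    have h2 := Subgroup.map_comap_eq_self_of_surjective hsurj Fsub
    rw [← heq, hmap] at h2
    have hc : cB ∈ Subgroup.zpowers tB := h2 ▸ c_mem_F
    obtain ⟨n, hn⟩ := hc
    simp only [] at hn
    change tB ^ n = cB at hn
    have hε : ε (tB ^ n) = Multiplicative.ofAdd n := by
      rw [map_zpow, ε_t, ← ofAdd_zsmul, smul_eq_mul, mul_one]
    have hn0 : n = 0 := by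
      have := hε
      rw [hn, ε_c] at this
      have h3 := congrArg Multiplicative.toAdd this
      simpa using h3.symm
    rw [hn0, zpow_zero] at hn
    exact ρ_c (by rw [← hn, map_one])
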